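/- Let (p,𝒟) be a GNS over an order 𝒪 and let Δ ⊂ 𝒪 be a finite set containing 0 that generates 𝒪 as an additive semigroup. Then (p,𝒟) has the finiteness property if and only if for every a ∈ R(p,𝒟) and every α ∈ Δ one has a + α ∈ R(p,𝒟), where R(p,𝒟) is the set of polynomials in 𝒪[x] admitting a finite digit representation modulo p. -/

import Mathlib

open Polynomial

/-- `D` is a complete residue system modulo `ϑ` containing `0`. -/
def IsCRS {R : Type*} [CommRing R] (ϑ : R) (D : Set R) : Prop :=
  0 ∈ D ∧ ∀ β : R, ∃! d : R, d ∈ D ∧ ϑ ∣ β - d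

/-- `a` admits a finite digit representation modulo `p` with digits in `D`. -/
def HasRep {R : Type*} [CommRing R] (p : Polynomial R) (D : Set R) (a : Polynomial R) : Prop :=
  ∃ (ℓ : ℕ) (d : ℕ → R), (∀ j < ℓ, d j ∈ D) ∧
    p ∣ a - ∑ j ∈ Finset.range ℓ, Polynomial.C (d j) * Polynomial.X ^ j

/-- The GNS `(p, D)` has the finiteness property. -/
def FinitenessProperty {R : Type*} [CommRing R] (p : Polynomial R) (D : Set R) : Prop :=
  ∀ a : Polynomial R, HasRep p D a


lemma hasRep_zero {R : Type*} [CommRing R] (p : Polynomial R) (D : Set R) :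
    HasRep p D 0 :=
  ⟨0, fun _ => 0, by simp, by simp⟩

lemma hasRep_mulX {R : Type*} [CommRing R] {p : Polynomial R} {D : Set R} (h0 : (0 : R) ∈ D)
    {a : Polynomial R} (ha : HasRep p D a) : HasRep p D (a * X) := by
  obtain ⟨ℓ, d, hd, hdvd⟩ := ha
  refine ⟨ℓ + 1, fun j => if j = 0 then 0 else d (j - 1), ?_, ?_⟩
  · intro j hj
    by_cases hjz : j = 0
    · simpa [hjz] using h0
    · simpa [hjz] using hd (j - 1) (by omega)
  · have hsum : (∑ j ∈ Finset.range (ℓ + 1),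
        Polynomial.C (if j = 0 then (0 : R) else d (j - 1)) * Polynomial.X ^ j)
        = (∑ j ∈ Finset.range ℓ, Polynomial.C (d j) * Polynomial.X ^ j) * X := by
      rw [Finset.sum_range_succ']
      simp [Finset.sum_mul, pow_succ, mul_assoc]
    rw [hsum, ← sub_mul]
    exact hdvd.mul_right X

/-- Let `(p, 𝒟)` be a GNS over an order `𝒪` and let `Δ ⊂ 𝒪` be a finite
set containing `0` that generates `𝒪` as an additive semigroup. Then `(p, 𝒟)` has the
finiteness property iff for every `a ∈ R(p,𝒟)` and every `α ∈ Δ` we have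
`a + α ∈ R(p,𝒟)`. -/
theorem statement8 {K : Type*} [Field K] [NumberField K] (𝒪 : Subalgebra ℤ K)
    (p : Polynomial 𝒪) (hp : p.Monic)
    (D : Set 𝒪) (hD : IsCRS (p.coeff 0) D)
    (Δ : Finset 𝒪) (hΔ0 : (0 : 𝒪) ∈ Δ)
    (hgen : AddSubmonoid.closure (Δ : Set 𝒪) = ⊤) :
    FinitenessProperty p D ↔
      ∀ a : Polynomial 𝒪, HasRep p D a → ∀ α ∈ Δ, HasRep p D (a + Polynomial.C α) := by
  constructor
  · intro hf
    exact fun a _ α _ => hf _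
  · intro h
    have key : ∀ α : 𝒪, ∀ a, HasRep p D a → HasRep p D (a + Polynomial.C α) := by
      have main : ∀ α ∈ AddSubmonoid.closure (Δ : Set 𝒪),
          ∀ a, HasRep p D a → HasRep p D (a + Polynomial.C α) := by
        intro α hα
        induction hα using AddSubmonoid.closure_induction with
        | mem x hx => exact fun a ha => h a ha x hx
        | zero => intro a ha; simpa using ha
        | add x y hx hy ihx ihy =>
          intro a ha
          have := ihy (a + Polynomial.C x) (ihx a ha)
          simpa [Polynomial.C_add, add_assoc] using this
      intro α
      exact main α (by rw [hgen]; trivial)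
    intro a
    induction a using Polynomial.recOnHorner with
    | M0 => exact hasRep_zero p D
    | MC q α _ _ ih => exact key α q ih
    | MX q _ ih => exact hasRep_mulX hD.1 ih
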